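/- arXiv:1711.09459 — 2 statements merged into one kernel-verified Lean document; each statement's English description precedes it below -/
import Mathlib

section
/- Spectraballs are never sv-generic free spectrahedra: for every d ≥ 1 and E ∈ M_d(ℂ)^g, and for every e ≥ 1 and C ∈ M_e(ℂ)^g such that D_C(n) = B_E(n) for all n ≥ 1, the tuple C is not sv-generic. -/
open scoped Kronecker Matrix Matrix.Norms.L2Operator ComplexOrder

noncomputable section

/-- `Λ_A(X) = Σⱼ Aⱼ ⊗ Xⱼ` (Kronecker product), a `dn × dn` matrix. -/
def lamK {g d n : ℕ} (A : Fin g → Matrix (Fin d) (Fin d) ℂ)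
    (X : Fin g → Matrix (Fin n) (Fin n) ℂ) :
    Matrix (Fin d × Fin n) (Fin d × Fin n) ℂ :=
  ∑ j, (A j) ⊗ₖ (X j)

/-- `L_A(X) = I + Λ_A(X) + Λ_A(X)^*`. -/
def Lpen {g d n : ℕ} (A : Fin g → Matrix (Fin d) (Fin d) ℂ)
    (X : Fin g → Matrix (Fin n) (Fin n) ℂ) :
    Matrix (Fin d × Fin n) (Fin d × Fin n) ℂ :=
  1 + lamK A X + (lamK A X)ᴴ

/-- The `n × n` block of a `gn × gn` matrix in position `(j, i)`. -/
def blk {g n : ℕ} (M : Matrix (Fin g × Fin n) (Fin g × Fin n) ℂ) (j i : Fin g) :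
    Matrix (Fin n) (Fin n) ℂ :=
  fun a b => M (j, a) (i, b)

/-- The convexotonic map `p(X) = X (I - Λ_Ξ(X))⁻¹`, given blockwise by
`p(X)ᵢ = Σⱼ Xⱼ [(I - Λ_Ξ(X))⁻¹]_{j,i}`. -/
def pmap {g n : ℕ} (Ξ : Fin g → Matrix (Fin g) (Fin g) ℂ)
    (X : Fin g → Matrix (Fin n) (Fin n) ℂ) : Fin g → Matrix (Fin n) (Fin n) ℂ :=
  fun i => ∑ j, X j * blk ((1 - lamK Ξ X)⁻¹) j i

/-- The convexotonic map `q(X) = X (I + Λ_Ξ(X))⁻¹`, given blockwise by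
`q(X)ᵢ = Σⱼ Xⱼ [(I + Λ_Ξ(X))⁻¹]_{j,i}`. -/
def qmap {g n : ℕ} (Ξ : Fin g → Matrix (Fin g) (Fin g) ℂ)
    (X : Fin g → Matrix (Fin n) (Fin n) ℂ) : Fin g → Matrix (Fin n) (Fin n) ℂ :=
  fun i => ∑ j, X j * blk ((1 + lamK Ξ X)⁻¹) j i

/-- A tuple `Ξ` of `g × g` matrices is convexotonic if
`Ξ_k Ξ_j = Σ_s (Ξ_j)_{k,s} Ξ_s` for all `j, k`. -/
def Convexotonic {g : ℕ} (Ξ : Fin g → Matrix (Fin g) (Fin g) ℂ) : Prop :=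
  ∀ j k, Ξ k * Ξ j = ∑ s, (Ξ j) k s • Ξ s

/-- `Λ_A(α) = Σⱼ αⱼ Aⱼ` for a scalar point `α ∈ ℂ^g`. -/
def lamScalar {g d : ℕ} (A : Fin g → Matrix (Fin d) (Fin d) ℂ) (α : Fin g → ℂ) :
    Matrix (Fin d) (Fin d) ℂ :=
  ∑ j, α j • A j

/-- A hyperbasis of `ℂ^d`: `d+1` vectors, each `d` of which form a basis. -/
def Hyperbasis {d : ℕ} (u : Fin (d + 1) → (Fin d → ℂ)) : Prop :=
  ∀ i : Fin (d + 1),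
    LinearIndependent ℂ (fun j : {j : Fin (d + 1) // j ≠ i} => u j) ∧
    Submodule.span ℂ (Set.range fun j : {j : Fin (d + 1) // j ≠ i} => u j) = ⊤

/-- The tuple `A ∈ M_d(ℂ)^g` is sv-generic. -/
def SvGeneric {g d : ℕ} (A : Fin g → Matrix (Fin d) (Fin d) ℂ) : Prop :=
  (∃ (α : Fin (d + 1) → (Fin g → ℂ)) (u : Fin (d + 1) → (Fin d → ℂ)),
    (∀ j, (1 - (lamScalar A (α j))ᴴ * lamScalar A (α j)).PosSemidef ∧
      u j ≠ 0 ∧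
      LinearMap.ker (Matrix.mulVecLin (1 - (lamScalar A (α j))ᴴ * lamScalar A (α j)))
        = Submodule.span ℂ {u j}) ∧
    Hyperbasis u) ∧
  (∃ (β : Fin d → (Fin g → ℂ)) (v : Fin d → (Fin d → ℂ)),
    (∀ k, (1 - lamScalar A (β k) * (lamScalar A (β k))ᴴ).PosSemidef ∧
      v k ≠ 0 ∧
      LinearMap.ker (Matrix.mulVecLin (1 - lamScalar A (β k) * (lamScalar A (β k))ᴴ))
        = Submodule.span ℂ {v k}) ∧
    LinearIndependent ℂ v ∧ Submodule.span ℂ (Set.range v) = ⊤)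

/-- Evaluation of a `k × l` matrix of noncommutative polynomials at a tuple of
`n × n` matrices, yielding a `kn × ln` matrix. -/
def polyEval {k l g n : ℕ} (Q : Matrix (Fin k) (Fin l) (FreeAlgebra ℂ (Fin g)))
    (X : Fin g → Matrix (Fin n) (Fin n) ℂ) :
    Matrix (Fin k × Fin n) (Fin l × Fin n) ℂ :=
  fun a b => (FreeAlgebra.lift ℂ X) (Q a.1 b.1) a.2 b.2


namespace SB15
open Matrix

/-- embed a vector into Euclidean space -/
def env {ι : Type*} [Fintype ι] (x : ι → ℂ) : EuclideanSpace ℂ ι := (WithLp.equiv 2 _).symm x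

lemma env_inner {ι : Type*} [Fintype ι] (x y : ι → ℂ) :
    (inner ℂ (env x) (env y) : ℂ) = star x ⬝ᵥ y :=
  by rw [dotProduct_comm]; rfl

lemma dot_self_eq {ι : Type*} [Fintype ι] (x : ι → ℂ) :
    star x ⬝ᵥ x = ((‖env x‖^2 : ℝ) : ℂ) := by
  rw [← env_inner]; exact_mod_cast inner_self_eq_norm_sq_to_K (𝕜 := ℂ) _

lemma env_eq_zero {ι : Type*} [Fintype ι] {x : ι → ℂ} (h : ‖env x‖ = 0) : x = 0 := by
  have h0 : env x = 0 := norm_eq_zero.mp h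
  funext i
  exact congrFun ((WithLp.toLp_eq_zero 2).mp h0) i

lemma norm_le_of_sq_le {a b : ℝ} (ha : 0 ≤ a) (hb : 0 ≤ b) (h : a^2 ≤ b^2) : a ≤ b := by
  nlinarith

/-- the two-point level-3 matrix tuple: γ in block (0,1), δ in block (1,2) -/
def pt {g : ℕ} (γ δ : Fin g → ℂ) : Fin g → Matrix (Fin 3) (Fin 3) ℂ :=
  fun j => Matrix.of fun a b =>
    if a = 0 ∧ b = 1 then γ j else if a = 1 ∧ b = 2 then δ j else 0

def col {m : ℕ} (z : Fin m × Fin 3 → ℂ) (c : Fin 3) : Fin m → ℂ := fun p => z (p, c)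

lemma lamK_pt_apply {g m : ℕ} (C : Fin g → Matrix (Fin m) (Fin m) ℂ) (γ δ : Fin g → ℂ)
    (p q : Fin m) (r s : Fin 3) :
    lamK C (pt γ δ) (p, r) (q, s) =
      (if r = 0 ∧ s = 1 then lamScalar C γ p q
        else if r = 1 ∧ s = 2 then lamScalar C δ p q else 0) := by
  simp only [lamK, Matrix.sum_apply, Matrix.kroneckerMap_apply, pt, Matrix.of_apply,
    lamScalar, Matrix.smul_apply, smul_eq_mul]
  split_ifs <;> simp [mul_comm]

lemma mulVec_lamK_pt {g m : ℕ} (C : Fin g → Matrix (Fin m) (Fin m) ℂ) (γ δ : Fin g → ℂ)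
    (z : Fin m × Fin 3 → ℂ) :
    lamK C (pt γ δ) *ᵥ z = fun pr =>
      if pr.2 = 0 then (lamScalar C γ *ᵥ col z 1) pr.1
      else if pr.2 = 1 then (lamScalar C δ *ᵥ col z 2) pr.1 else 0 := by
  funext ⟨p, r⟩
  simp only [Matrix.mulVec, dotProduct, Fintype.sum_prod_type, lamK_pt_apply]
  fin_cases r <;>
    simp [Fin.sum_univ_three, Matrix.mulVec, dotProduct, col]

lemma nsq_split {m : ℕ} (z : Fin m × Fin 3 → ℂ) :
    ‖env z‖^2 = ‖env (col z 0)‖^2 + ‖env (col z 1)‖^2 + ‖env (col z 2)‖^2 := by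
  have h : star z ⬝ᵥ z = (star (col z 0) ⬝ᵥ (col z 0))
      + (star (col z 1) ⬝ᵥ (col z 1))
      + (star (col z 2) ⬝ᵥ (col z 2)) := by
    simp only [dotProduct, Fintype.sum_prod_type, Fin.sum_univ_three, Pi.star_apply, col]
    repeat rw [← Finset.sum_add_distrib]
  rw [dot_self_eq, dot_self_eq, dot_self_eq, dot_self_eq] at h
  exact_mod_cast h

lemma contraction_of_psd {m : ℕ} {A : Matrix (Fin m) (Fin m) ℂ}
    (h : (1 - Aᴴ * A).PosSemidef) (z : Fin m → ℂ) : ‖env (A *ᵥ z)‖ ≤ ‖env z‖ := by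
  have h2 := h.dotProduct_mulVec_nonneg z
  have key : star (A *ᵥ z) ⬝ᵥ (A *ᵥ z) = star z ⬝ᵥ ((Aᴴ * A) *ᵥ z) := by
    rw [Matrix.star_mulVec, ← Matrix.dotProduct_mulVec, Matrix.mulVec_mulVec]
  rw [Matrix.sub_mulVec, Matrix.one_mulVec, dotProduct_sub, ← key,
    dot_self_eq, dot_self_eq] at h2
  rw [Complex.le_def] at h2
  simp only [Complex.sub_re, Complex.ofReal_re, Complex.zero_re] at h2
  have h4 : (0:ℝ) ≤ ‖env z‖^2 - ‖env (A *ᵥ z)‖^2 := by linarith [h2.1]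
  nlinarith [norm_nonneg (env z), norm_nonneg (env (A *ᵥ z))]

lemma contraction_flip {m : ℕ} {B : Matrix (Fin m) (Fin m) ℂ}
    (h : ∀ z, ‖env (Bᴴ *ᵥ z)‖ ≤ ‖env z‖) (z : Fin m → ℂ) : ‖env (B *ᵥ z)‖ ≤ ‖env z‖ := by
  have key : star (B *ᵥ z) ⬝ᵥ (B *ᵥ z) = star z ⬝ᵥ (Bᴴ *ᵥ (B *ᵥ z)) := by
    rw [Matrix.dotProduct_mulVec (star z), Matrix.star_mulVec]
  have h1 : ‖env (B *ᵥ z)‖^2 ≤ ‖env z‖ * ‖env (B *ᵥ z)‖ := by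
    have hd := dot_self_eq (B *ᵥ z)
    rw [key, ← env_inner] at hd
    have h2 : (‖env (B *ᵥ z)‖^2 : ℝ) = (inner ℂ (env z) (env (Bᴴ *ᵥ (B *ᵥ z))) : ℂ).re := by
      rw [hd, Complex.ofReal_re]
    rw [h2]
    calc (inner ℂ (env z) (env (Bᴴ *ᵥ (B *ᵥ z))) : ℂ).re
        ≤ ‖(inner ℂ (env z) (env (Bᴴ *ᵥ (B *ᵥ z))) : ℂ)‖ := RCLike.re_le_norm (K := ℂ) _
      _ ≤ ‖env z‖ * ‖env (Bᴴ *ᵥ (B *ᵥ z))‖ := norm_inner_le_norm _ _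
      _ ≤ ‖env z‖ * ‖env (B *ᵥ z)‖ :=
          mul_le_mul_of_nonneg_left (h _) (norm_nonneg _)
  nlinarith [norm_nonneg (env (B *ᵥ z)), norm_nonneg (env z)]

lemma opNorm_le_one {k l : Type*} [Fintype k] [Fintype l] [DecidableEq k] [DecidableEq l]
    {M : Matrix k l ℂ} (h : ∀ z : l → ℂ, ‖env (M *ᵥ z)‖ ≤ ‖env z‖) : ‖M‖ ≤ 1 := by
  rw [Matrix.l2_opNorm_def]
  refine ContinuousLinearMap.opNorm_le_bound _ zero_le_one (fun x => ?_)
  rw [one_mul]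
  exact h x

lemma mulVec_le_of_opNorm_le {k l : Type*} [Fintype k] [Fintype l] [DecidableEq k] [DecidableEq l]
    {M : Matrix k l ℂ} (h : ‖M‖ ≤ 1) (z : l → ℂ) : ‖env (M *ᵥ z)‖ ≤ ‖env z‖ := by
  calc ‖env (M *ᵥ z)‖ ≤ ‖M‖ * ‖env z‖ := Matrix.l2_opNorm_mulVec M (env z)
    _ ≤ 1 * ‖env z‖ := mul_le_mul_of_nonneg_right h (norm_nonneg _)
    _ = ‖env z‖ := one_mul _

lemma star_dot_conjTranspose_mulVec {ι : Type*} [Fintype ι] (M : Matrix ι ι ℂ)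
    (z : ι → ℂ) :
    star z ⬝ᵥ (Mᴴ *ᵥ z) = star (star z ⬝ᵥ (M *ᵥ z)) := by
  rw [Matrix.star_dotProduct, Matrix.star_mulVec, Matrix.conjTranspose_conjTranspose,
    ← Matrix.dotProduct_mulVec]

lemma quad_form {g m : ℕ} (C : Fin g → Matrix (Fin m) (Fin m) ℂ) (γ δ : Fin g → ℂ)
    (z : Fin m × Fin 3 → ℂ) :
    star z ⬝ᵥ (Lpen C (pt γ δ) *ᵥ z) = star z ⬝ᵥ z
      + (star (col z 0) ⬝ᵥ (lamScalar C γ *ᵥ col z 1)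
         + star (col z 1) ⬝ᵥ (lamScalar C δ *ᵥ col z 2))
      + star (star (col z 0) ⬝ᵥ (lamScalar C γ *ᵥ col z 1)
         + star (col z 1) ⬝ᵥ (lamScalar C δ *ᵥ col z 2)) := by
  have hw : star z ⬝ᵥ (lamK C (pt γ δ) *ᵥ z)
      = star (col z 0) ⬝ᵥ (lamScalar C γ *ᵥ col z 1)
         + star (col z 1) ⬝ᵥ (lamScalar C δ *ᵥ col z 2) := by
    rw [mulVec_lamK_pt]
    simp only [dotProduct, Fintype.sum_prod_type, Fin.sum_univ_three, Pi.star_apply]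
    simp [col, Finset.sum_add_distrib]
  rw [Lpen, Matrix.add_mulVec, Matrix.add_mulVec, Matrix.one_mulVec,
    dotProduct_add, dotProduct_add, hw,
    star_dot_conjTranspose_mulVec, hw]

lemma lpen_isHermitian {g d n : ℕ} (A : Fin g → Matrix (Fin d) (Fin d) ℂ)
    (X : Fin g → Matrix (Fin n) (Fin n) ℂ) : (Lpen A X).IsHermitian := by
  unfold Matrix.IsHermitian Lpen
  rw [Matrix.conjTranspose_add, Matrix.conjTranspose_add, Matrix.conjTranspose_one,
    Matrix.conjTranspose_conjTranspose]
  abel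

lemma lamScalar_zero {g m : ℕ} (C : Fin g → Matrix (Fin m) (Fin m) ℂ) :
    lamScalar C (0 : Fin g → ℂ) = 0 := by
  simp [lamScalar]

/-- positivity of the complex number `↑(‖z‖²) + w + star w` -/
lemma psd_aux {m : ℕ} (z : Fin m × Fin 3 → ℂ) (w : ℂ) (a b : ℝ)
    (hw : ‖w‖ ≤ a * b) (htot : a^2 + b^2 ≤ ‖env z‖^2) :
    0 ≤ ((‖env z‖^2 : ℝ) : ℂ) + w + star w := by
  have hre : ((‖env z‖^2 : ℝ) : ℂ) + w + star w = ((‖env z‖^2 + 2 * w.re : ℝ) : ℂ) := by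
    rw [Complex.star_def, add_assoc, Complex.add_conj]
    push_cast
    ring
  rw [hre, ← Complex.ofReal_zero, Complex.real_le_real]
  have h1 : -w.re ≤ ‖w‖ := by
    have h2 := Complex.abs_re_le_norm w
    have h3 := neg_abs_le w.re
    linarith
  nlinarith [sq_nonneg (a - b)]

lemma dot_mul_self {ι : Type*} [Fintype ι] (A : Matrix ι ι ℂ) (z : ι → ℂ) :
    star (A *ᵥ z) ⬝ᵥ (A *ᵥ z) = star z ⬝ᵥ ((Aᴴ * A) *ᵥ z) := by
  rw [Matrix.star_mulVec, ← Matrix.dotProduct_mulVec, Matrix.mulVec_mulVec]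

lemma dot_split {m : ℕ} (z : Fin m × Fin 3 → ℂ) :
    star z ⬝ᵥ z = star (col z 0) ⬝ᵥ (col z 0) + star (col z 1) ⬝ᵥ (col z 1)
      + star (col z 2) ⬝ᵥ (col z 2) := by
  simp only [dotProduct, Fintype.sum_prod_type, Fin.sum_univ_three, Pi.star_apply, col]
  repeat rw [← Finset.sum_add_distrib]

lemma lpen_psd_left {g m : ℕ} (C : Fin g → Matrix (Fin m) (Fin m) ℂ) (γ : Fin g → ℂ)
    (hγ : ∀ z, ‖env (lamScalar C γ *ᵥ z)‖ ≤ ‖env z‖) :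
    (Lpen C (pt γ 0)).PosSemidef := by
  refine .of_dotProduct_mulVec_nonneg (lpen_isHermitian C _) (fun z => ?_)
  rw [quad_form, lamScalar_zero]
  simp only [Matrix.zero_mulVec, dotProduct_zero, add_zero]
  rw [dot_self_eq, ← env_inner]
  refine psd_aux z _ (‖env (col z 0)‖) (‖env (col z 1)‖) ?_ ?_
  · calc ‖(inner ℂ (env (col z 0)) (env (lamScalar C γ *ᵥ col z 1)) : ℂ)‖
        ≤ ‖env (col z 0)‖ * ‖env (lamScalar C γ *ᵥ col z 1)‖ := norm_inner_le_norm _ _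
      _ ≤ ‖env (col z 0)‖ * ‖env (col z 1)‖ :=
          mul_le_mul_of_nonneg_left (hγ _) (norm_nonneg _)
  · rw [nsq_split z]; nlinarith [sq_nonneg (‖env (col z 2)‖)]

lemma lpen_psd_right {g m : ℕ} (C : Fin g → Matrix (Fin m) (Fin m) ℂ) (δ : Fin g → ℂ)
    (hδ : ∀ z, ‖env (lamScalar C δ *ᵥ z)‖ ≤ ‖env z‖) :
    (Lpen C (pt 0 δ)).PosSemidef := by
  refine .of_dotProduct_mulVec_nonneg (lpen_isHermitian C _) (fun z => ?_)
  rw [quad_form, lamScalar_zero]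
  simp only [Matrix.zero_mulVec, dotProduct_zero, zero_add]
  rw [dot_self_eq, ← env_inner]
  refine psd_aux z _ (‖env (col z 1)‖) (‖env (col z 2)‖) ?_ ?_
  · calc ‖(inner ℂ (env (col z 1)) (env (lamScalar C δ *ᵥ col z 2)) : ℂ)‖
        ≤ ‖env (col z 1)‖ * ‖env (lamScalar C δ *ᵥ col z 2)‖ := norm_inner_le_norm _ _
      _ ≤ ‖env (col z 1)‖ * ‖env (col z 2)‖ :=
          mul_le_mul_of_nonneg_left (hδ _) (norm_nonneg _)
  · rw [nsq_split z]; nlinarith [sq_nonneg (‖env (col z 0)‖)]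

lemma norm_lamK_pt_le {g m : ℕ} (E : Fin g → Matrix (Fin m) (Fin m) ℂ) (γ δ : Fin g → ℂ)
    (hγ : ∀ z, ‖env (lamScalar E γ *ᵥ z)‖ ≤ ‖env z‖)
    (hδ : ∀ z, ‖env (lamScalar E δ *ᵥ z)‖ ≤ ‖env z‖) :
    ‖lamK E (pt γ δ)‖ ≤ 1 := by
  refine opNorm_le_one (fun z => ?_)
  refine norm_le_of_sq_le (norm_nonneg _) (norm_nonneg _) ?_
  rw [mulVec_lamK_pt]
  set y : Fin m × Fin 3 → ℂ := fun pr =>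
    if pr.2 = 0 then (lamScalar E γ *ᵥ col z 1) pr.1
    else if pr.2 = 1 then (lamScalar E δ *ᵥ col z 2) pr.1 else 0 with hy
  have hc0 : col y 0 = lamScalar E γ *ᵥ col z 1 := by funext p; simp [col, hy]
  have hc1 : col y 1 = lamScalar E δ *ᵥ col z 2 := by funext p; simp [col, hy]
  have hc2 : col y 2 = (0 : Fin m → ℂ) := by funext p; simp [col, hy]
  have h1 : ‖env y‖^2 = ‖env (lamScalar E γ *ᵥ col z 1)‖^2
      + ‖env (lamScalar E δ *ᵥ col z 2)‖^2 := by
    rw [nsq_split y, hc0, hc1, hc2]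
    have : ‖env (0 : Fin m → ℂ)‖ = 0 := norm_eq_zero.mpr rfl
    rw [this]; ring
  rw [h1, nsq_split z]
  have g1 := hγ (col z 1)
  have g2 := hδ (col z 2)
  nlinarith [norm_nonneg (env (lamScalar E γ *ᵥ col z 1)),
    norm_nonneg (env (lamScalar E δ *ᵥ col z 2)), norm_nonneg (env (col z 1)),
    norm_nonneg (env (col z 2)), sq_nonneg (‖env (col z 0)‖)]

lemma extract_left {g m : ℕ} (E : Fin g → Matrix (Fin m) (Fin m) ℂ) (γ δ : Fin g → ℂ)
    (h : ‖lamK E (pt γ δ)‖ ≤ 1) (z : Fin m → ℂ) :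
    ‖env (lamScalar E γ *ᵥ z)‖ ≤ ‖env z‖ := by
  set zh : Fin m × Fin 3 → ℂ := fun pr => if pr.2 = 1 then z pr.1 else 0 with hzh
  have h1 := mulVec_le_of_opNorm_le h zh
  have hcz1 : col zh 1 = z := by funext q; simp [col, hzh]
  have hcz2 : col zh 2 = (0 : Fin m → ℂ) := by funext q; simp [col, hzh]
  have hcz0 : col zh 0 = (0 : Fin m → ℂ) := by funext q; simp [col, hzh]
  have hmv : lamK E (pt γ δ) *ᵥ zh
      = fun pr => if pr.2 = 0 then (lamScalar E γ *ᵥ z) pr.1 else 0 := by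
    rw [mulVec_lamK_pt]
    funext pr
    rcases pr with ⟨p, r⟩
    fin_cases r <;> simp [hcz1, hcz2]
  rw [hmv] at h1
  set y : Fin m × Fin 3 → ℂ := fun pr => if pr.2 = 0 then (lamScalar E γ *ᵥ z) pr.1 else 0
    with hy
  have hy0 : col y 0 = lamScalar E γ *ᵥ z := by funext p; simp [col, hy]
  have hy1 : col y 1 = (0 : Fin m → ℂ) := by funext p; simp [col, hy]
  have hy2 : col y 2 = (0 : Fin m → ℂ) := by funext p; simp [col, hy]
  have hnz : ‖env (0 : Fin m → ℂ)‖ = 0 := norm_eq_zero.mpr rfl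
  have e1 : ‖env (lamScalar E γ *ᵥ z)‖ ≤ ‖env y‖ := by
    refine norm_le_of_sq_le (norm_nonneg _) (norm_nonneg _) ?_
    rw [nsq_split y, hy0, hy1, hy2, hnz]; nlinarith []
  have e2 : ‖env zh‖ ≤ ‖env z‖ := by
    refine norm_le_of_sq_le (norm_nonneg _) (norm_nonneg _) ?_
    rw [nsq_split zh, hcz0, hcz1, hcz2, hnz]; nlinarith []
  linarith

lemma extract_right {g m : ℕ} (E : Fin g → Matrix (Fin m) (Fin m) ℂ) (γ δ : Fin g → ℂ)
    (h : ‖lamK E (pt γ δ)‖ ≤ 1) (z : Fin m → ℂ) :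
    ‖env (lamScalar E δ *ᵥ z)‖ ≤ ‖env z‖ := by
  set zh : Fin m × Fin 3 → ℂ := fun pr => if pr.2 = 2 then z pr.1 else 0 with hzh
  have h1 := mulVec_le_of_opNorm_le h zh
  have hcz1 : col zh 1 = (0 : Fin m → ℂ) := by funext q; simp [col, hzh]
  have hcz2 : col zh 2 = z := by funext q; simp [col, hzh]
  have hcz0 : col zh 0 = (0 : Fin m → ℂ) := by funext q; simp [col, hzh]
  have hmv : lamK E (pt γ δ) *ᵥ zh
      = fun pr => if pr.2 = 1 then (lamScalar E δ *ᵥ z) pr.1 else 0 := by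
    rw [mulVec_lamK_pt]
    funext pr
    rcases pr with ⟨p, r⟩
    fin_cases r <;> simp [hcz1, hcz2]
  rw [hmv] at h1
  set y : Fin m × Fin 3 → ℂ := fun pr => if pr.2 = 1 then (lamScalar E δ *ᵥ z) pr.1 else 0
    with hy
  have hy1 : col y 1 = lamScalar E δ *ᵥ z := by funext p; simp [col, hy]
  have hy0 : col y 0 = (0 : Fin m → ℂ) := by funext p; simp [col, hy]
  have hy2 : col y 2 = (0 : Fin m → ℂ) := by funext p; simp [col, hy]
  have hnz : ‖env (0 : Fin m → ℂ)‖ = 0 := norm_eq_zero.mpr rfl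
  have e1 : ‖env (lamScalar E δ *ᵥ z)‖ ≤ ‖env y‖ := by
    refine norm_le_of_sq_le (norm_nonneg _) (norm_nonneg _) ?_
    rw [nsq_split y, hy0, hy1, hy2, hnz]; nlinarith []
  have e2 : ‖env zh‖ ≤ ‖env z‖ := by
    refine norm_le_of_sq_le (norm_nonneg _) (norm_nonneg _) ?_
    rw [nsq_split zh, hcz0, hcz1, hcz2, hnz]; nlinarith []
  linarith

end SB15

/-- spectraballs are never sv-generic free spectrahedra. -/
theorem spectraball_not_svGeneric {g : ℕ} :
    ∀ d : ℕ, 1 ≤ d → ∀ E : Fin g → Matrix (Fin d) (Fin d) ℂ,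
    ∀ e : ℕ, 1 ≤ e → ∀ C : Fin g → Matrix (Fin e) (Fin e) ℂ,
      (∀ n : ℕ, 1 ≤ n →
        {X : Fin g → Matrix (Fin n) (Fin n) ℂ | (Lpen C X).PosSemidef} =
        {X : Fin g → Matrix (Fin n) (Fin n) ℂ | ‖lamK E X‖ ≤ 1}) →
      ¬ SvGeneric C := by
  intro d hd E e he C hsets hsv
  classical
  open SB15 in
  obtain ⟨⟨α, u, hα, _⟩, ⟨β, v, hβ, _, hvspan⟩⟩ := hsv
  obtain ⟨hA1, hu0, hAker⟩ := hα 0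
  set A : Matrix (Fin e) (Fin e) ℂ := lamScalar C (α 0) with hA
  -- the kernel condition gives AᴴA u = u
  have hAu : (Aᴴ * A) *ᵥ u 0 = u 0 := by
    have hmem : u 0 ∈ Submodule.span ℂ {u 0} := Submodule.mem_span_singleton_self _
    rw [← hAker] at hmem
    have h0 := LinearMap.mem_ker.mp hmem
    rw [Matrix.mulVecLin_apply, Matrix.sub_mulVec, Matrix.one_mulVec, sub_eq_zero] at h0
    exact h0.symm
  have hBu : ∀ k : Fin e, (lamScalar C (β k))ᴴ *ᵥ u 0 = 0 := by
    intro k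
    set B : Matrix (Fin e) (Fin e) ℂ := lamScalar C (β k) with hB
    obtain ⟨hB1, hv0, hBker⟩ := hβ k
    -- contraction facts
    have hAcon : ∀ z, ‖env (A *ᵥ z)‖ ≤ ‖env z‖ := contraction_of_psd hA1
    have hBHpsd : (1 - Bᴴᴴ * Bᴴ).PosSemidef := by
      rwa [Matrix.conjTranspose_conjTranspose]
    have hBHcon : ∀ z, ‖env (Bᴴ *ᵥ z)‖ ≤ ‖env z‖ := contraction_of_psd hBHpsd
    have hBcon : ∀ z, ‖env (B *ᵥ z)‖ ≤ ‖env z‖ := contraction_flip hBHcon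
    -- the level-3 set equality
    have hiff : ∀ X : Fin g → Matrix (Fin 3) (Fin 3) ℂ,
        (Lpen C X).PosSemidef ↔ ‖lamK E X‖ ≤ 1 :=
      fun X => Set.ext_iff.mp (hsets 3 (by norm_num)) X
    -- transfer the contractions to E
    have hEα : ∀ z, ‖env (lamScalar E (α 0) *ᵥ z)‖ ≤ ‖env z‖ :=
      extract_left E (α 0) 0 ((hiff (pt (α 0) 0)).mp (lpen_psd_left C (α 0) hAcon))
    have hEβ : ∀ z, ‖env (lamScalar E (β k) *ᵥ z)‖ ≤ ‖env z‖ :=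
      extract_right E 0 (β k) ((hiff (pt 0 (β k))).mp (lpen_psd_right C (β k) hBcon))
    -- the key level-3 positivity
    have hpsd3 : (Lpen C (pt (α 0) (β k))).PosSemidef :=
      (hiff (pt (α 0) (β k))).mpr (norm_lamK_pt_le E (α 0) (β k) hEα hEβ)
    -- evaluate the quadratic form at the chosen vector
    set zc : Fin e × Fin 3 → ℂ := fun pr =>
      if pr.2 = 0 then (-(A *ᵥ u 0)) pr.1
      else if pr.2 = 1 then u 0 pr.1 else (-(Bᴴ *ᵥ u 0)) pr.1 with hzc
    have hc0 : col zc 0 = -(A *ᵥ u 0) := by funext p; simp [col, hzc]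
    have hc1 : col zc 1 = u 0 := by funext p; simp [col, hzc]
    have hc2 : col zc 2 = -(Bᴴ *ᵥ u 0) := by funext p; simp [col, hzc]
    have hq := hpsd3.dotProduct_mulVec_nonneg zc
    rw [quad_form, hc0, hc1, hc2, dot_split zc, hc0, hc1, hc2] at hq
    have r1 : star (-(A *ᵥ u 0)) ⬝ᵥ (A *ᵥ u 0) = -(star (u 0) ⬝ᵥ u 0) := by
      rw [star_neg, neg_dotProduct, dot_mul_self, hAu]
    have r2 : star (u 0) ⬝ᵥ (B *ᵥ (-(Bᴴ *ᵥ u 0)))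
        = -(star (Bᴴ *ᵥ u 0) ⬝ᵥ (Bᴴ *ᵥ u 0)) := by
      rw [Matrix.mulVec_neg, dotProduct_neg, Matrix.mulVec_mulVec]
      congr 1
      rw [dot_mul_self Bᴴ (u 0), Matrix.conjTranspose_conjTranspose]
    have r3 : star (-(A *ᵥ u 0)) ⬝ᵥ (-(A *ᵥ u 0)) = star (u 0) ⬝ᵥ u 0 := by
      rw [star_neg, neg_dotProduct, dotProduct_neg, neg_neg,
        dot_mul_self, hAu]
    have r4 : star (-(Bᴴ *ᵥ u 0)) ⬝ᵥ (-(Bᴴ *ᵥ u 0))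
        = star (Bᴴ *ᵥ u 0) ⬝ᵥ (Bᴴ *ᵥ u 0) := by
      rw [star_neg, neg_dotProduct, dotProduct_neg, neg_neg]
    rw [r1, r2, r3, r4, dot_self_eq (u 0), dot_self_eq (Bᴴ *ᵥ u 0)] at hq
    set qu : ℝ := ‖env (u 0)‖^2 with hqu
    set qb : ℝ := ‖env (Bᴴ *ᵥ u 0)‖^2 with hqb
    have hsimp : ((qu : ℂ) + (qu : ℂ) + (qb : ℂ)) + (-(qu:ℂ) + -(qb:ℂ))
        + star (-(qu:ℂ) + -(qb:ℂ)) = ((-qb : ℝ) : ℂ) := by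
      simp only [Complex.star_def, map_add, map_neg, Complex.conj_ofReal]
      push_cast
      ring
    rw [hsimp] at hq
    rw [← Complex.ofReal_zero, Complex.real_le_real] at hq
    have hqb0 : qb = 0 := le_antisymm (by linarith) (sq_nonneg _)
    have : ‖env (Bᴴ *ᵥ u 0)‖ = 0 := by
      have := pow_eq_zero_iff (n := 2) (by norm_num) |>.mp hqb0
      exact this
    exact env_eq_zero this
  -- orthogonality of u 0 to every v k
  have hortho : ∀ k : Fin e, star (u 0) ⬝ᵥ v k = 0 := by
    intro k
    set B : Matrix (Fin e) (Fin e) ℂ := lamScalar C (β k) with hB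
    obtain ⟨hB1, hv0, hBker⟩ := hβ k
    have hvk : (B * Bᴴ) *ᵥ v k = v k := by
      have hmem : v k ∈ Submodule.span ℂ {v k} := Submodule.mem_span_singleton_self _
      rw [← hBker] at hmem
      have h0 := LinearMap.mem_ker.mp hmem
      rw [Matrix.mulVecLin_apply, Matrix.sub_mulVec, Matrix.one_mulVec, sub_eq_zero] at h0
      exact h0.symm
    have hstep : star (u 0) ᵥ* B = 0 := by
      have : star (Bᴴ *ᵥ u 0) = star (u 0) ᵥ* Bᴴᴴ := Matrix.star_mulVec _ _
      rw [Matrix.conjTranspose_conjTranspose] at this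
      rw [← this, hBu k, star_zero]
    calc star (u 0) ⬝ᵥ v k = star (u 0) ⬝ᵥ ((B * Bᴴ) *ᵥ v k) := by rw [hvk]
      _ = (star (u 0) ᵥ* (B * Bᴴ)) ⬝ᵥ v k := Matrix.dotProduct_mulVec _ _ _
      _ = ((star (u 0) ᵥ* B) ᵥ* Bᴴ) ⬝ᵥ v k := by rw [Matrix.vecMul_vecMul]
      _ = 0 := by rw [hstep, Matrix.zero_vecMul, zero_dotProduct]
  -- u 0 is orthogonal to a spanning set, hence zero
  have hzero : ∀ y : Fin e → ℂ, y ∈ Submodule.span ℂ (Set.range v) →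
      star (u 0) ⬝ᵥ y = 0 := by
    intro y hy
    induction hy using Submodule.span_induction with
    | mem x hx => obtain ⟨k, rfl⟩ := hx; exact hortho k
    | zero => exact dotProduct_zero _
    | add x y' hx hy' ihx ihy => rw [dotProduct_add, ihx, ihy, add_zero]
    | smul a x hx ih => rw [dotProduct_smul, ih, smul_zero]
  have hu00 : star (u 0) ⬝ᵥ u 0 = 0 := hzero (u 0) (hvspan ▸ Submodule.mem_top)
  rw [dot_self_eq (u 0)] at hu00
  have : ‖env (u 0)‖^2 = 0 := by exact_mod_cast hu00
  have : ‖env (u 0)‖ = 0 := pow_eq_zero_iff (n := 2) (by norm_num) |>.mp this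
  exact hu0 (env_eq_zero this)
end
end

section
/- Let E_1 = I_2 and let E_2 be the 2×2 matrix with a 1 in the (1,2) entry and zeros elsewhere. Suppose Z is a 2×2 unitary matrix and Ξ = (Ξ_1, Ξ_2) is a pair of 2×2 complex matrices satisfying E_k Z E_j = Σ_{s=1}^2 (Ξ_j)_{k,s} E_s for all j,k ∈ {1,2}. Then Z = α I_2 for some α ∈ ℂ with |α| = 1, and Ξ = (α E_1, α E_2) = (α I_2, α E_2). Moreover, for this Ξ, for every n and every pair X = (X_1,X_2) of n×n complex matrices with I − αX_1 invertible, the matrix I − Λ_Ξ(X) is invertible and the convexotonic map satisfies X(I − Λ_Ξ(X))^{-1} = ( X_1(I−αX_1)^{-1}, (I−αX_1)^{-1} X_2 (I−αX_1)^{-1} ). -/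
open scoped Kronecker Matrix Matrix.Norms.L2Operator ComplexOrder

noncomputable section

/-- The tuple `E = (I₂, E₂)` with `E₂` the matrix unit in position `(1,2)`. -/
def Etup : Fin 2 → Matrix (Fin 2) (Fin 2) ℂ :=
  ![1, Matrix.single 0 1 1]


lemma aux_main (α : ℂ) (Ξ : Fin 2 → Matrix (Fin 2) (Fin 2) ℂ)
    (h0 : Ξ 0 = α • (1 : Matrix (Fin 2) (Fin 2) ℂ))
    (h1 : Ξ 1 = α • Matrix.single 0 1 1)
    (n : ℕ) (X : Fin 2 → Matrix (Fin n) (Fin n) ℂ)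
    (hM : IsUnit (1 - α • X 0)) :
    IsUnit (1 - lamK Ξ X) ∧
    pmap Ξ X 0 = X 0 * (1 - α • X 0)⁻¹ ∧
    pmap Ξ X 1 = (1 - α • X 0)⁻¹ * X 1 * (1 - α • X 0)⁻¹ := by
  set M : Matrix (Fin n) (Fin n) ℂ := 1 - α • X 0 with hMdef
  have hdet : IsUnit M.det := (Matrix.isUnit_iff_isUnit_det M).mp hM
  have hMr : M * M⁻¹ = 1 := Matrix.mul_nonsing_inv M hdet
  have hMl : M⁻¹ * M = 1 := Matrix.nonsing_inv_mul M hdet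
  set E2 : Matrix (Fin 2) (Fin 2) ℂ := Matrix.single 0 1 1 with hE2
  set P : Matrix (Fin n) (Fin n) ℂ := α • (M⁻¹ * X 1 * M⁻¹) with hP
  set N : Matrix (Fin 2 × Fin n) (Fin 2 × Fin n) ℂ :=
    (1 : Matrix (Fin 2) (Fin 2) ℂ) ⊗ₖ M⁻¹ + E2 ⊗ₖ P with hN
  have hE22 : E2 * E2 = 0 := Matrix.single_mul_single_of_ne (i := (0 : Fin 2)) (j := (1 : Fin 2)) (k := 0)
    (c := (1 : ℂ)) (d := (1 : ℂ)) (h := by decide)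
  have hlam : (1 : Matrix (Fin 2 × Fin n) (Fin 2 × Fin n) ℂ) - lamK Ξ X
      = (1 : Matrix (Fin 2) (Fin 2) ℂ) ⊗ₖ M - E2 ⊗ₖ (α • X 1) := by
    ext ⟨i, a⟩ ⟨j, b⟩
    fin_cases i <;> fin_cases j <;>
      simp [lamK, Fin.sum_univ_two, h0, h1, hMdef, hE2, Matrix.kroneckerMap_apply,
        Matrix.sub_apply, Matrix.one_apply, Matrix.smul_apply, Matrix.single,
        Matrix.of_apply]
  have key : ((1 : Matrix (Fin 2 × Fin n) (Fin 2 × Fin n) ℂ) - lamK Ξ X) * N = 1 := by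
    rw [hlam, hN, sub_mul, mul_add, mul_add, ← Matrix.mul_kronecker_mul,
      ← Matrix.mul_kronecker_mul, ← Matrix.mul_kronecker_mul, ← Matrix.mul_kronecker_mul]
    rw [hE22, hMr, one_mul, mul_one, one_mul]
    have h1' : M * P = (α • X 1) * M⁻¹ := by
      rw [hP, Matrix.mul_smul, Matrix.smul_mul, ← Matrix.mul_assoc, ← Matrix.mul_assoc,
        hMr, one_mul]
    rw [h1', Matrix.zero_kronecker, Matrix.one_kronecker_one]
    abel
  have hU : IsUnit (1 - lamK Ξ X) := by
    refine (Matrix.isUnit_iff_isUnit_det _).mpr (IsUnit.of_mul_eq_one N.det ?_)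
    rw [← Matrix.det_mul, key, Matrix.det_one]
  have hinv : (1 - lamK Ξ X)⁻¹ = N := Matrix.inv_eq_right_inv key
  have b00 : blk N 0 0 = M⁻¹ := by
    funext a b
    simp [blk, hN, Matrix.kroneckerMap_apply, Matrix.one_apply, hE2,
      Matrix.single, Matrix.of_apply]
  have b10 : blk N 1 0 = 0 := by
    funext a b
    simp [blk, hN, Matrix.kroneckerMap_apply, Matrix.one_apply, hE2,
      Matrix.single, Matrix.of_apply]
  have b01 : blk N 0 1 = P := by
    funext a b
    simp [blk, hN, Matrix.kroneckerMap_apply, Matrix.one_apply, hE2,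
      Matrix.single, Matrix.of_apply]
  have b11 : blk N 1 1 = M⁻¹ := by
    funext a b
    simp [blk, hN, Matrix.kroneckerMap_apply, Matrix.one_apply, hE2,
      Matrix.single, Matrix.of_apply]
  have hc : X 0 * M⁻¹ = M⁻¹ * X 0 := by
    have h : M * X 0 = X 0 * M := by rw [hMdef]; noncomm_ring
    calc X 0 * M⁻¹ = (M⁻¹ * M) * (X 0 * M⁻¹) := by rw [hMl, one_mul]
      _ = M⁻¹ * (M * X 0) * M⁻¹ := by simp only [Matrix.mul_assoc]
      _ = M⁻¹ * (X 0 * M) * M⁻¹ := by rw [h]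
      _ = M⁻¹ * X 0 * (M * M⁻¹) := by simp only [Matrix.mul_assoc]
      _ = M⁻¹ * X 0 := by rw [hMr, mul_one]
  refine ⟨hU, ?_, ?_⟩
  · show (∑ j, X j * blk ((1 - lamK Ξ X)⁻¹) j 0) = X 0 * M⁻¹
    rw [hinv, Fin.sum_univ_two, b00, b10, mul_zero, add_zero]
  · show (∑ j, X j * blk ((1 - lamK Ξ X)⁻¹) j 1) = M⁻¹ * X 1 * M⁻¹
    rw [hinv, Fin.sum_univ_two, b01, b11]
    have h2 : M⁻¹ - 1 = α • (X 0 * M⁻¹) := by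
      calc M⁻¹ - 1 = M⁻¹ * (1 - M) := by rw [Matrix.mul_sub, mul_one, hMl]
        _ = M⁻¹ * (α • X 0) := by rw [hMdef]; congr 1; abel
        _ = α • (M⁻¹ * X 0) := mul_smul_comm α M⁻¹ (X 0)
        _ = α • (X 0 * M⁻¹) := by rw [hc]
    calc X 0 * P + X 1 * M⁻¹
        = (α • (X 0 * M⁻¹)) * (X 1 * M⁻¹) + X 1 * M⁻¹ := by
          rw [hP, mul_smul_comm, smul_mul_assoc]
          congr 2
          simp only [Matrix.mul_assoc]
      _ = (M⁻¹ - 1) * (X 1 * M⁻¹) + X 1 * M⁻¹ := by rw [h2]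
      _ = M⁻¹ * X 1 * M⁻¹ := by noncomm_ring

/-- if `Z` is a `2 × 2` unitary and `E_k Z E_j = Σ_s (Ξ_j)_{k,s} E_s`,
then `Z = α I₂` with `|α| = 1` and `Ξ = (α E₁, α E₂)`; moreover for this `Ξ`,
whenever `I - α X₁` is invertible so is `I - Λ_Ξ(X)`, and the convexotonic map is
`X(I - Λ_Ξ(X))⁻¹ = (X₁(I-αX₁)⁻¹, (I-αX₁)⁻¹ X₂ (I-αX₁)⁻¹)`. -/
theorem unitary_Z_is_scalar (Z : Matrix (Fin 2) (Fin 2) ℂ)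
    (hZ : Zᴴ * Z = 1 ∧ Z * Zᴴ = 1)
    (Ξ : Fin 2 → Matrix (Fin 2) (Fin 2) ℂ)
    (hΞ : ∀ k j, Etup k * Z * Etup j = ∑ s, (Ξ j) k s • Etup s) :
    ∃ α : ℂ, ‖α‖ = 1 ∧ Z = α • (1 : Matrix (Fin 2) (Fin 2) ℂ) ∧
      Ξ 0 = α • Etup 0 ∧ Ξ 1 = α • Etup 1 ∧
      ∀ (n : ℕ) (X : Fin 2 → Matrix (Fin n) (Fin n) ℂ),
        IsUnit (1 - α • X 0) →
          IsUnit (1 - lamK Ξ X) ∧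
          pmap Ξ X 0 = X 0 * (1 - α • X 0)⁻¹ ∧
          pmap Ξ X 1 = (1 - α • X 0)⁻¹ * X 1 * (1 - α • X 0)⁻¹ := by
  obtain ⟨hZ1, -⟩ := hZ
  have hE0 : Etup 0 = 1 := rfl
  have hE1 : Etup 1 = Matrix.single 0 1 1 := rfl
  have h00 := hΞ 0 0
  rw [Fin.sum_univ_two, hE0, hE1, mul_one, one_mul] at h00
  rw [h00] at hZ1
  have e00 := congrFun (congrFun hZ1 0) 0
  have e11 := congrFun (congrFun hZ1 1) 1
  simp [Matrix.mul_apply, Matrix.conjTranspose_apply, Fin.sum_univ_two,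
    Matrix.one_apply, Matrix.single, Matrix.of_apply, Matrix.smul_apply,
    Matrix.add_apply] at e00 e11
  set a := Ξ 0 0 0 with ha_def
  set b := Ξ 0 0 1 with hb_def
  have hb : b = 0 := by
    have h : (starRingEnd ℂ) b * b = 0 := by rw [e00] at e11; linear_combination e11
    have h2 : (Complex.normSq b : ℂ) = 0 := by
      rw [Complex.normSq_eq_conj_mul_self]; exact h
    exact Complex.normSq_eq_zero.mp (by exact_mod_cast h2)
  have ha : ‖a‖ = 1 := by
    have h2 : (Complex.normSq a : ℂ) = 1 := by
      rw [Complex.normSq_eq_conj_mul_self]; exact e00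
    have h3 : Complex.normSq a = 1 := by exact_mod_cast h2
    rw [Complex.norm_def, h3, Real.sqrt_one]
  have hZeq : Z = a • 1 := by rw [h00, hb]; simp
  have h10 := hΞ 1 0
  rw [Fin.sum_univ_two, hE0, hE1, mul_one, hZeq] at h10
  have f10 := congrFun (congrFun h10 0) 0
  have f11 := congrFun (congrFun h10 0) 1
  simp [Matrix.mul_apply, Fin.sum_univ_two, Matrix.single, Matrix.of_apply,
    Matrix.one_apply, Matrix.smul_apply, Matrix.add_apply] at f10 f11
  have h01 := hΞ 0 1
  rw [Fin.sum_univ_two, hE0, hE1, one_mul, hZeq] at h01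
  have g00 := congrFun (congrFun h01 0) 0
  have g01 := congrFun (congrFun h01 0) 1
  simp [Matrix.mul_apply, Fin.sum_univ_two, Matrix.single, Matrix.of_apply,
    Matrix.one_apply, Matrix.smul_apply, Matrix.add_apply] at g00 g01
  have h11 := hΞ 1 1
  rw [Fin.sum_univ_two, hE0, hE1, hZeq] at h11
  have g10 := congrFun (congrFun h11 0) 0
  have g11 := congrFun (congrFun h11 0) 1
  simp [Matrix.mul_apply, Fin.sum_univ_two, Matrix.single, Matrix.of_apply,
    Matrix.one_apply, Matrix.smul_apply, Matrix.add_apply] at g10 g11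
  have hΞ0 : Ξ 0 = a • (1 : Matrix (Fin 2) (Fin 2) ℂ) := by
    ext i j
    fin_cases i <;> fin_cases j <;>
      simp [Matrix.smul_apply, Matrix.one_apply, ← ha_def, ← hb_def, hb, ← f10, ← f11]
  have hΞ1 : Ξ 1 = a • Matrix.single 0 1 1 := by
    ext i j
    fin_cases i <;> fin_cases j <;>
      simp [Matrix.smul_apply, Matrix.single, Matrix.of_apply,
        ← g00, ← g01, ← g10, ← g11]
  exact ⟨a, ha, hZeq, by rw [hΞ0, hE0], by rw [hΞ1, hE1],
    fun n X hX => aux_main a Ξ hΞ0 hΞ1 n X hX⟩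
end
end
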